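/- Every 3-copula C satisfies r_3 κ_3(C) = (1/2) r_3 r_2 (κ_2(C_1) + κ_2(C_2) + κ_2(C_3)) for any multivariate measure of concordance κ; equivalently, since r_2 = 2/3, κ_3(C) = (1/3)(κ_2(C_1) + κ_2(C_2) + κ_2(C_3)). -/

import Mathlib

open MeasureTheory Filter

noncomputable section

/-- The unit cube `I^n ⊆ ℝ^n`. -/
def cube (n : ℕ) : Set (Fin n → ℝ) := Set.univ.pi fun _ => Set.Icc (0:ℝ) 1

/-- The box `[0,x] = [0,x_1] × ⋯ × [0,x_n]`. -/
def box {n : ℕ} (x : Fin n → ℝ) : Set (Fin n → ℝ) := Set.univ.pi fun i => Set.Icc 0 (x i)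

/-- `C` is an `n`-copula: on `I^n` it is the box-distribution function of a probability
measure all of whose one-dimensional margins are uniform on `[0,1]`. -/
def IsCopula {n : ℕ} (C : (Fin n → ℝ) → ℝ) : Prop :=
  ∃ μ : Measure (Fin n → ℝ), IsProbabilityMeasure μ ∧
    (∀ x ∈ cube n, C x = (μ (box x)).toReal) ∧
    (∀ i : Fin n, μ.map (fun y => y i) = volume.restrict (Set.Icc (0:ℝ) 1))

/-- The action `τ*(C) = C ∘ τ` of a coordinate permutation (with index permutation `τ`). -/
def permTrans {n : ℕ} (τ : Equiv.Perm (Fin n)) (C : (Fin n → ℝ) → ℝ) : (Fin n → ℝ) → ℝ :=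
  fun x => C fun i => x (τ i)

/-- The action `σ_S*(C)(x) = μ_C(σ_S([0,x]))` of the reflection `σ_S`, written out by
inclusion–exclusion in terms of the values of `C`. -/
def reflTrans {n : ℕ} (S : Finset (Fin n)) (C : (Fin n → ℝ) → ℝ) : (Fin n → ℝ) → ℝ :=
  fun x => ∑ T ∈ S.powerset, (-1 : ℝ) ^ T.card *
    C (fun i => if i ∈ T then 1 - x i else if i ∈ S then 1 else x i)

/-- The comonotone copula `M(t_1,…,t_n) = min(t_1,…,t_n)`. -/
def Mcop (n : ℕ) : (Fin n → ℝ) → ℝ := fun x => iInf x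

/-- The independence copula `Π(t_1,…,t_n) = t_1 ⋯ t_n`. -/
def Pcop (n : ℕ) : (Fin n → ℝ) → ℝ := fun x => ∏ i, x i

/-- The proper `(n - card P)`-copula of the extended marginal `C_P` of `C`:
coordinates in `P` are set equal to `1` and the remaining coordinates are relabelled
in increasing order. -/
def properMarg {n : ℕ} (C : (Fin n → ℝ) → ℝ) (P : Finset (Fin n)) :
    (Fin (Pᶜ.card) → ℝ) → ℝ :=
  fun y => C fun i => if h : i ∈ Pᶜ then y ((Pᶜ.orderIsoOfFin rfl).symm ⟨i, h⟩) else 1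

/-- A multivariate measure of concordance `κ = ({κ_n},{r_n})` in the sense of Taylor:
normalization, monotonicity, continuity, permutation invariance, duality, the
reflection symmetry property and the transition property, extended by `κ_0 = κ_1 = 0`. -/
structure ConcordanceMeasure where
  κ : (n : ℕ) → ((Fin n → ℝ) → ℝ) → ℝ
  r : ℕ → ℝ
  kappa_zero : ∀ C, κ 0 C = 0
  kappa_one : ∀ C, κ 1 C = 0
  normM : ∀ n, 2 ≤ n → κ n (Mcop n) = 1
  normPi : ∀ n, 2 ≤ n → κ n (Pcop n) = 0
  mono : ∀ n, 2 ≤ n → ∀ A B : (Fin n → ℝ) → ℝ, IsCopula A → IsCopula B →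
    (∀ x ∈ cube n, A x ≤ B x) →
    (∀ x ∈ cube n, reflTrans Finset.univ A x ≤ reflTrans Finset.univ B x) →
    κ n A ≤ κ n B
  cont : ∀ n, 2 ≤ n → ∀ (C : (Fin n → ℝ) → ℝ) (Cm : ℕ → (Fin n → ℝ) → ℝ),
    IsCopula C → (∀ m, IsCopula (Cm m)) →
    TendstoUniformlyOn Cm C atTop (cube n) →
    Tendsto (fun m => κ n (Cm m)) atTop (nhds (κ n C))
  permInv : ∀ n, 2 ≤ n → ∀ C : (Fin n → ℝ) → ℝ, IsCopula C →
    ∀ τ : Equiv.Perm (Fin n), κ n (permTrans τ C) = κ n C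
  duality : ∀ n, 2 ≤ n → ∀ C : (Fin n → ℝ) → ℝ, IsCopula C →
    κ n (reflTrans Finset.univ C) = κ n C
  rsp : ∀ n, 2 ≤ n → ∀ C : (Fin n → ℝ) → ℝ, IsCopula C →
    ∑ S : Finset (Fin n), κ n (reflTrans S C) = 0
  transition : ∀ n, 2 ≤ n → ∀ (C : (Fin n → ℝ) → ℝ) (E : (Fin (n+1) → ℝ) → ℝ),
    IsCopula C → IsCopula E →
    (∀ x ∈ cube n, C x = E (fun i : Fin (n+1) =>
      if h : (i : ℕ) = 0 then 1 else x ⟨(i : ℕ) - 1, by have := i.isLt; omega⟩)) →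
    r n * κ n C = κ (n+1) E + κ (n+1) (reflTrans {0} E)


namespace Ubeda

variable {n : ℕ}

lemma mem_cube {x : Fin n → ℝ} : x ∈ cube n ↔ ∀ i, 0 ≤ x i ∧ x i ≤ 1 := by
  constructor
  · intro h i; exact h i (Set.mem_univ i)
  · intro h i _; exact h i

lemma measurableSet_box (x : Fin n → ℝ) : MeasurableSet (box x) :=
  MeasurableSet.univ_pi fun _ => measurableSet_Icc

/-- reflection map -/
def R (S : Finset (Fin n)) : (Fin n → ℝ) → (Fin n → ℝ) :=
  fun y i => if i ∈ S then 1 - y i else y i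

lemma measurable_R (S : Finset (Fin n)) : Measurable (R S) := by
  apply measurable_pi_lambda
  intro i
  by_cases h : i ∈ S
  · simp only [R, h, if_true]; exact measurable_const.sub (measurable_pi_apply i)
  · simpa [R, h] using (measurable_pi_apply i)

section marg
variable {μ : Measure (Fin n → ℝ)}
  (hm : ∀ i : Fin n, μ.map (fun y => y i) = volume.restrict (Set.Icc (0:ℝ) 1))

include hm

lemma coord_eq_null (i : Fin n) (c : ℝ) : μ {y | y i = c} = 0 := by
  have : {y : Fin n → ℝ | y i = c} = (fun y => y i) ⁻¹' {c} := rfl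
  rw [this, ← Measure.map_apply (measurable_pi_apply i) (measurableSet_singleton c), hm i,
    Measure.restrict_apply (measurableSet_singleton c)]
  exact measure_mono_null Set.inter_subset_left Real.volume_singleton

lemma coord_out_null (i : Fin n) : μ {y | y i ∉ Set.Icc (0:ℝ) 1} = 0 := by
  have : {y : Fin n → ℝ | y i ∉ Set.Icc (0:ℝ) 1} = (fun y => y i) ⁻¹' (Set.Icc (0:ℝ) 1)ᶜ := rfl
  rw [this, ← Measure.map_apply (measurable_pi_apply i) measurableSet_Icc.compl, hm i,
    Measure.restrict_apply measurableSet_Icc.compl]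
  simp

end marg

lemma map_one_sub_restrict :
    (volume.restrict (Set.Icc (0:ℝ) 1)).map (fun t => 1 - t) = volume.restrict (Set.Icc (0:ℝ) 1) := by
  have hmp : MeasurePreserving (fun t : ℝ => 1 - t) volume volume :=
    Measure.measurePreserving_sub_left (volume : Measure ℝ) 1
  have hmeas : Measurable fun t : ℝ => 1 - t := measurable_const.sub measurable_id
  ext s hs
  rw [Measure.map_apply hmeas hs, Measure.restrict_apply (hmeas hs),
    Measure.restrict_apply hs]
  have hpre : (fun t : ℝ => 1 - t) ⁻¹' s ∩ Set.Icc 0 1 = (fun t : ℝ => 1 - t) ⁻¹' (s ∩ Set.Icc 0 1) := by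
    ext t
    simp only [Set.mem_inter_iff, Set.mem_preimage, Set.mem_Icc]
    constructor
    · rintro ⟨h1, h2, h3⟩; exact ⟨h1, by linarith, by linarith⟩
    · rintro ⟨h1, h2, h3⟩; exact ⟨h1, by linarith, by linarith⟩
  rw [hpre, hmp.measure_preimage (hs.inter measurableSet_Icc).nullMeasurableSet]

section main
variable {μ : Measure (Fin n → ℝ)} [IsProbabilityMeasure μ]

lemma marg_R (hm : ∀ i : Fin n, μ.map (fun y => y i) = volume.restrict (Set.Icc (0:ℝ) 1))
    (S : Finset (Fin n)) (i : Fin n) :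
    (μ.map (R S)).map (fun y => y i) = volume.restrict (Set.Icc (0:ℝ) 1) := by
  rw [Measure.map_map (measurable_pi_apply i) (measurable_R S)]
  by_cases h : i ∈ S
  · have : ((fun y : Fin n → ℝ => y i) ∘ R S) = (fun t : ℝ => 1 - t) ∘ (fun y => y i) := by
      funext y; simp [R, h]
    rw [this, ← Measure.map_map (show Measurable fun t : ℝ => 1 - t from measurable_const.sub measurable_id) (measurable_pi_apply i),
      hm i, map_one_sub_restrict]
  · have : ((fun y : Fin n → ℝ => y i) ∘ R S) = (fun y : Fin n → ℝ => y i) := by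
      funext y; simp [R, h]
    rw [this, hm i]

lemma refl_box_aux (hm : ∀ i : Fin n, μ.map (fun y => y i) = volume.restrict (Set.Icc (0:ℝ) 1))
    (S : Finset (Fin n)) :
    ∀ x ∈ cube n,
      (μ (Set.univ.pi fun i => if i ∈ S then Set.Icc (1 - x i) 1 else Set.Icc 0 (x i))).toReal
        = ∑ T ∈ S.powerset, (-1:ℝ)^T.card *
            (μ (box fun i => if i ∈ T then 1 - x i else if i ∈ S then 1 else x i)).toReal := by
  induction S using Finset.induction with
  | empty =>
      intro x hx
      simp [box]
  | @insert a S ha IH =>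
      intro x hx
      have hx' : ∀ i, 0 ≤ x i ∧ x i ≤ 1 := mem_cube.1 hx
      set c : ℝ := 1 - x a with hc
      have hc0 : 0 ≤ c := by have := (hx' a).2; simp [hc]; linarith
      have hc1 : c ≤ 1 := by have := (hx' a).1; simp [hc]; linarith
      set J : Fin n → Set ℝ := fun i => if i ∈ S then Set.Icc (1 - x i) 1 else Set.Icc 0 (x i)
        with hJ
      set Tgt := Set.univ.pi fun i => if i = a then Set.Icc c 1 else J i with hTgt
      set Full := Set.univ.pi fun i => if i = a then Set.Icc (0:ℝ) 1 else J i with hFullDef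
      set LowO := Set.univ.pi fun i => if i = a then Set.Ico (0:ℝ) c else J i with hLowO
      set LowC := Set.univ.pi fun i => if i = a then Set.Icc (0:ℝ) c else J i with hLowC
      have hJm : ∀ i, MeasurableSet (J i) := by
        intro i; rw [hJ]; dsimp only; split_ifs <;> exact measurableSet_Icc
      have hTgtm : MeasurableSet Tgt := by
        apply MeasurableSet.univ_pi; intro i; split_ifs
        · exact measurableSet_Icc
        · exact hJm i
      have hLowOm : MeasurableSet LowO := by
        apply MeasurableSet.univ_pi; intro i; split_ifs
        · exact measurableSet_Ico
        · exact hJm i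
      -- the goal set equals Tgt
      have hgoalset :
          (Set.univ.pi fun i => if i ∈ insert a S then Set.Icc (1 - x i) 1 else Set.Icc 0 (x i))
            = Tgt := by
        apply congrArg
        funext i
        by_cases hi : i = a
        · subst hi; simp [ha, hc]
        · simp [hi, Finset.mem_insert, hJ]
      -- split at coordinate a
      have hsplit : Set.Icc (0:ℝ) 1 = Set.Ico 0 c ∪ Set.Icc c 1 := by
        ext t
        simp only [Set.mem_Icc, Set.mem_Ico, Set.mem_union]
        constructor
        · rintro ⟨h1, h2⟩
          rcases lt_or_ge t c with h | h
          · exact Or.inl ⟨h1, h⟩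
          · exact Or.inr ⟨h, h2⟩
        · rintro (⟨h1, h2⟩ | ⟨h1, h2⟩) <;> constructor <;> linarith
      have hFullUnion : Full = LowO ∪ Tgt := by
        ext y
        simp only [hFullDef, hLowO, hTgt, Set.mem_pi, Set.mem_univ, true_implies, Set.mem_union]
        constructor
        · intro h
          have ha' := h a
          simp only [if_pos rfl] at ha'
          rw [hsplit] at ha'
          rcases ha' with hA | hB
          · left; intro i; by_cases hi : i = a
            · subst hi; simpa using hA
            · simpa [hi] using h i
          · right; intro i; by_cases hi : i = a
            · subst hi; simpa using hB
            · simpa [hi] using h i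
        · rintro (h | h) i <;> by_cases hi : i = a
          · have h2 := h i
            simp only [if_pos hi] at h2 ⊢
            exact ⟨h2.1, le_of_lt (lt_of_lt_of_le h2.2 hc1)⟩
          · simpa [hi] using h i
          · have h2 := h i
            simp only [if_pos hi] at h2 ⊢
            exact ⟨le_trans hc0 h2.1, h2.2⟩
          · simpa [hi] using h i
      have hdisj : Disjoint LowO Tgt := by
        rw [Set.disjoint_left]
        intro y hy hy'
        have h1 := hy a (Set.mem_univ a)
        have h2 := hy' a (Set.mem_univ a)
        simp only [if_pos rfl] at h1 h2
        exact absurd h2.1 (not_le.mpr h1.2)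
      have hmeasFull : μ Full = μ LowO + μ Tgt := by
        rw [hFullUnion]; exact measure_union hdisj hTgtm
      -- LowO and LowC have the same measure
      have hLowEq : μ LowO = μ LowC := by
        apply le_antisymm
        · apply measure_mono
          intro y hy i _
          have := hy i (Set.mem_univ i)
          dsimp only at this ⊢
          split_ifs with h
          · subst h; simp only [if_pos rfl] at this; exact ⟨this.1, le_of_lt this.2⟩
          · simpa [h] using this
        · have hsub : LowC ⊆ LowO ∪ {y | y a = c} := by
            intro y hy
            have h1 := hy a (Set.mem_univ a)
            simp only [if_pos rfl] at h1
            rcases lt_or_eq_of_le h1.2 with h | h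
            · left; intro i _
              have := hy i (Set.mem_univ i)
              dsimp only at this ⊢
              split_ifs with hi
              · subst hi; simp only [if_pos rfl] at this; exact ⟨this.1, h⟩
              · simpa [hi] using this
            · right; exact h
          calc μ LowC ≤ μ (LowO ∪ {y | y a = c}) := measure_mono hsub
            _ ≤ μ LowO + μ {y | y a = c} := measure_union_le _ _
            _ = μ LowO := by rw [coord_eq_null hm a c, add_zero]
      -- identify Full and LowC as S-type sets for updated vectors
      set x1 := Function.update x a 1 with hx1def
      set x2 := Function.update x a c with hx2def
      have hx1 : x1 ∈ cube n := by
        apply mem_cube.2; intro i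
        rw [hx1def, Function.update_apply]
        split_ifs
        · exact ⟨zero_le_one, le_refl 1⟩
        · exact hx' i
      have hx2 : x2 ∈ cube n := by
        apply mem_cube.2; intro i
        rw [hx2def, Function.update_apply]
        split_ifs
        · exact ⟨hc0, hc1⟩
        · exact hx' i
      have heFull : Full = Set.univ.pi fun i =>
          if i ∈ S then Set.Icc (1 - x1 i) 1 else Set.Icc 0 (x1 i) := by
        rw [hFullDef]; apply congrArg; funext i
        by_cases hi : i = a
        · subst hi; simp [ha, hx1def]
        · simp [hi, hJ, hx1def, Function.update_of_ne hi]
      have heLowC : LowC = Set.univ.pi fun i =>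
          if i ∈ S then Set.Icc (1 - x2 i) 1 else Set.Icc 0 (x2 i) := by
        rw [hLowC]; apply congrArg; funext i
        by_cases hi : i = a
        · subst hi; simp [ha, hx2def]
        · simp [hi, hJ, hx2def, Function.update_of_ne hi]
      -- real-valued identity
      have htR : (μ Tgt).toReal = (μ Full).toReal - (μ LowC).toReal := by
        rw [← hLowEq]
        have := congrArg ENNReal.toReal hmeasFull
        rw [ENNReal.toReal_add (measure_ne_top μ _) (measure_ne_top μ _)] at this
        linarith
      rw [hgoalset, htR, heFull, heLowC, IH x1 hx1, IH x2 hx2,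
        Finset.sum_powerset_insert ha]
      have hterm1 : ∀ T ∈ S.powerset,
          (-1:ℝ)^T.card * (μ (box fun i => if i ∈ T then 1 - x1 i else if i ∈ S then 1 else x1 i)).toReal
          = (-1:ℝ)^T.card * (μ (box fun i => if i ∈ T then 1 - x i else if i ∈ insert a S then 1 else x i)).toReal := by
        intro T hT
        have haT : a ∉ T := fun h => ha (Finset.mem_powerset.1 hT h)
        have hbox : (box fun i => if i ∈ T then 1 - x1 i else if i ∈ S then 1 else x1 i)
            = box fun i => if i ∈ T then 1 - x i else if i ∈ insert a S then 1 else x i := by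
          apply congrArg
          funext i
          by_cases hi : i = a
          · subst hi; simp [haT, ha, hx1def]
          · rw [hx1def]
            simp only [Function.update_of_ne hi, Finset.mem_insert, hi, false_or]
        rw [hbox]
      have hterm2 : ∀ T ∈ S.powerset,
          (-1:ℝ)^T.card * (μ (box fun i => if i ∈ T then 1 - x2 i else if i ∈ S then 1 else x2 i)).toReal
          = -((-1:ℝ)^(insert a T).card * (μ (box fun i => if i ∈ insert a T then 1 - x i else if i ∈ insert a S then 1 else x i)).toReal) := by
        intro T hT
        have haT : a ∉ T := fun h => ha (Finset.mem_powerset.1 hT h)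
        rw [Finset.card_insert_of_notMem haT]
        have hbox : (box fun i => if i ∈ T then 1 - x2 i else if i ∈ S then 1 else x2 i)
            = box fun i => if i ∈ insert a T then 1 - x i else if i ∈ insert a S then 1 else x i := by
          apply congrArg
          funext i
          by_cases hi : i = a
          · subst hi; simp [haT, ha, hx2def, hc]
          · rw [hx2def]
            simp only [Function.update_of_ne hi, Finset.mem_insert, hi, false_or]
        rw [hbox]
        ring
      rw [Finset.sum_congr rfl hterm1, Finset.sum_congr rfl hterm2]
      rw [Finset.sum_neg_distrib]
      ring

lemma refl_value {C : (Fin n → ℝ) → ℝ}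
    (hb : ∀ x ∈ cube n, C x = (μ (box x)).toReal)
    (hm : ∀ i : Fin n, μ.map (fun y => y i) = volume.restrict (Set.Icc (0:ℝ) 1))
    (S : Finset (Fin n)) :
    ∀ x ∈ cube n, reflTrans S C x = ((μ.map (R S)) (box x)).toReal := by
  intro x hx
  have hx' : ∀ i, 0 ≤ x i ∧ x i ≤ 1 := mem_cube.1 hx
  have hpre : R S ⁻¹' box x
      = Set.univ.pi fun i => if i ∈ S then Set.Icc (1 - x i) 1 else Set.Icc 0 (x i) := by
    ext y
    simp only [box, Set.mem_preimage, Set.mem_pi, Set.mem_univ, true_implies, R, Set.mem_Icc]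
    constructor
    · intro h i
      have := h i
      by_cases hi : i ∈ S <;> simp only [hi, if_true, if_false, Set.mem_Icc] at this ⊢ <;>
        exact ⟨by linarith [this.1, this.2], by linarith [this.1, this.2]⟩
    · intro h i
      have := h i
      by_cases hi : i ∈ S <;> simp only [hi, if_true, if_false, Set.mem_Icc] at this ⊢ <;>
        exact ⟨by linarith [this.1, this.2], by linarith [this.1, this.2]⟩
  rw [Measure.map_apply (measurable_R S) (measurableSet_box x), hpre,
    refl_box_aux hm S x hx]
  unfold reflTrans
  apply Finset.sum_congr rfl
  intro T hT
  congr 1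
  apply hb
  apply mem_cube.2
  intro i
  split_ifs with h1 h2
  · exact ⟨by linarith [(hx' i).2], by linarith [(hx' i).1]⟩
  · exact ⟨zero_le_one, le_refl 1⟩
  · exact hx' i

lemma isCopula_refl {C : (Fin n → ℝ) → ℝ} (hC : IsCopula C) (S : Finset (Fin n)) :
    IsCopula (reflTrans S C) := by
  obtain ⟨μ, hp, hb, hm⟩ := hC
  exact ⟨μ.map (R S), Measure.isProbabilityMeasure_map (measurable_R S).aemeasurable,
    refl_value hb hm S, marg_R hm S⟩

end main

lemma refl_empty (C : (Fin n → ℝ) → ℝ) : reflTrans ∅ C = C := by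
  funext x
  simp [reflTrans]

lemma kappa_congr (κ : ConcordanceMeasure) {n : ℕ} (hn : 2 ≤ n)
    {A B : (Fin n → ℝ) → ℝ} (hA : IsCopula A) (hB : IsCopula B)
    (h : ∀ x ∈ cube n, A x = B x) : κ.κ n A = κ.κ n B := by
  have hrefl : ∀ x ∈ cube n, reflTrans Finset.univ A x = reflTrans Finset.univ B x := by
    intro x hx
    have hx' : ∀ i, 0 ≤ x i ∧ x i ≤ 1 := mem_cube.1 hx
    unfold reflTrans
    apply Finset.sum_congr rfl
    intro T hT
    congr 1
    apply h
    apply mem_cube.2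
    intro i
    split_ifs with h1 h2
    · exact ⟨by linarith [(hx' i).2], by linarith [(hx' i).1]⟩
    · exact ⟨zero_le_one, le_refl 1⟩
    · exact hx' i
  exact le_antisymm
    (κ.mono n hn A B hA hB (fun x hx => le_of_eq (h x hx)) (fun x hx => le_of_eq (hrefl x hx)))
    (κ.mono n hn B A hB hA (fun x hx => ge_of_eq (h x hx)) (fun x hx => ge_of_eq (hrefl x hx)))

/-- composition of reflections -/
lemma R_univ_comp (S : Finset (Fin n)) : R (Finset.univ) ∘ R S = R Sᶜ := by
  funext y i
  simp only [Function.comp_apply, R, Finset.mem_univ, if_true, Finset.mem_compl]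
  by_cases h : i ∈ S <;> simp [h] <;> ring

lemma refl_compl (κ : ConcordanceMeasure) (hn : 2 ≤ n) {C : (Fin n → ℝ) → ℝ}
    (hC : IsCopula C) (S : Finset (Fin n)) :
    κ.κ n (reflTrans Sᶜ C) = κ.κ n (reflTrans S C) := by
  obtain ⟨μ, hp, hb, hm⟩ := hC
  have hC' : IsCopula C := ⟨μ, hp, hb, hm⟩
  rw [← κ.duality n hn (reflTrans S C) (isCopula_refl hC' S)]
  haveI : IsProbabilityMeasure (μ.map (R S)) :=
    Measure.isProbabilityMeasure_map (measurable_R S).aemeasurable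
  apply kappa_congr κ hn (isCopula_refl hC' Sᶜ)
    (isCopula_refl (isCopula_refl hC' S) Finset.univ)
  intro x hx
  rw [refl_value hb hm Sᶜ x hx,
    refl_value (μ := μ.map (R S)) (refl_value hb hm S) (marg_R hm S) Finset.univ x hx,
    Measure.map_map (measurable_R Finset.univ) (measurable_R S), R_univ_comp S]

/-- relabelling map for a permutation -/
def Pm (τ : Equiv.Perm (Fin n)) : (Fin n → ℝ) → (Fin n → ℝ) := fun y j => y (τ.symm j)

lemma measurable_Pm (τ : Equiv.Perm (Fin n)) : Measurable (Pm τ) :=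
  measurable_pi_lambda _ fun j => measurable_pi_apply (τ.symm j)

lemma isCopula_perm {C : (Fin n → ℝ) → ℝ} (hC : IsCopula C) (τ : Equiv.Perm (Fin n)) :
    IsCopula (permTrans τ C) := by
  obtain ⟨μ, hp, hb, hm⟩ := hC
  refine ⟨μ.map (Pm τ), Measure.isProbabilityMeasure_map (measurable_Pm τ).aemeasurable, ?_, ?_⟩
  · intro x hx
    have hx' : ∀ i, 0 ≤ x i ∧ x i ≤ 1 := mem_cube.1 hx
    have hxτ : (fun i => x (τ i)) ∈ cube n := mem_cube.2 fun i => hx' (τ i)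
    have hpre : Pm τ ⁻¹' box x = box fun i => x (τ i) := by
      ext y
      simp only [box, Set.mem_preimage, Set.mem_pi, Set.mem_univ, true_implies, Pm]
      constructor
      · intro h i
        have := h (τ i)
        rwa [Equiv.symm_apply_apply] at this
      · intro h j
        have := h (τ.symm j)
        rwa [Equiv.apply_symm_apply] at this
    rw [Measure.map_apply (measurable_Pm τ) (measurableSet_box x), hpre]
    exact hb _ hxτ
  · intro i
    rw [Measure.map_map (measurable_pi_apply i) (measurable_Pm τ)]
    exact hm (τ.symm i)

lemma reflTrans_singleton (b : Fin n) (D : (Fin n → ℝ) → ℝ) (x : Fin n → ℝ) :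
    reflTrans {b} D x
      = D (fun i => if i = b then 1 else x i) - D (fun i => if i = b then 1 - x i else x i) := by
  unfold reflTrans
  rw [← insert_empty_eq, Finset.sum_powerset_insert (Finset.notMem_empty b),
    Finset.powerset_empty, Finset.sum_singleton, Finset.sum_singleton]
  have h1 : (fun i => if i ∈ (∅:Finset (Fin n)) then 1 - x i
      else if i ∈ insert b (∅:Finset (Fin n)) then (1:ℝ) else x i)
      = fun i => if i = b then 1 else x i := by
    funext i; by_cases h : i = b <;> simp [h]
  have h2 : (fun i => if i ∈ insert b (∅:Finset (Fin n)) then 1 - x i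
      else if i ∈ insert b (∅:Finset (Fin n)) then (1:ℝ) else x i)
      = fun i => if i = b then 1 - x i else x i := by
    funext i; by_cases h : i = b <;> simp [h]
  rw [h1, h2, Finset.card_insert_of_notMem (Finset.notMem_empty b), Finset.card_empty]
  ring

lemma refl_perm_single (a : Fin n) (τ : Equiv.Perm (Fin n)) (C : (Fin n → ℝ) → ℝ) :
    reflTrans {a} (permTrans τ C) = permTrans τ (reflTrans {τ.symm a} C) := by
  funext x
  have key : ∀ i : Fin n, (τ i = a) ↔ (i = τ.symm a) := by
    intro i
    constructor
    · intro h; simp [← h]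
    · intro h; simp [h]
  rw [reflTrans_singleton]
  show _ = reflTrans {τ.symm a} C (fun i => x (τ i))
  rw [reflTrans_singleton]
  have e1 : (fun i => (fun j => if j = a then (1:ℝ) else x j) (τ i))
      = fun i => if i = τ.symm a then (1:ℝ) else x (τ i) := by
    funext i
    by_cases h : τ i = a
    · simp [h, (key i).1 h]
    · have h2 : ¬ i = τ.symm a := fun hh => h ((key i).2 hh)
      simp [h, h2]
  have e2 : (fun i => (fun j => if j = a then 1 - x j else x j) (τ i))
      = fun i => if i = τ.symm a then 1 - x (τ i) else x (τ i) := by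
    funext i
    by_cases h : τ i = a
    · simp [h, (key i).1 h]
    · have h2 : ¬ i = τ.symm a := fun hh => h ((key i).2 hh)
      simp [h, h2]
  show permTrans τ C _ - permTrans τ C _ = _
  unfold permTrans
  rw [e1, e2]

/-- the proper marginal is a copula -/
lemma isCopula_properMarg {C : (Fin n → ℝ) → ℝ} (hC : IsCopula C) (P : Finset (Fin n)) :
    IsCopula (properMarg C P) := by
  obtain ⟨μ, hp, hb, hm⟩ := hC
  set m := Pᶜ.card with hmdef
  set e := Pᶜ.orderIsoOfFin rfl with hedef
  set proj : (Fin n → ℝ) → (Fin m → ℝ) := fun y j => y (e j) with hproj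
  have hprojm : Measurable proj := measurable_pi_lambda _ fun j => measurable_pi_apply _
  refine ⟨μ.map proj, Measure.isProbabilityMeasure_map hprojm.aemeasurable, ?_, ?_⟩
  · intro x hx
    have hx' : ∀ j, 0 ≤ x j ∧ x j ≤ 1 := mem_cube.1 hx
    set z : Fin n → ℝ := fun i => if h : i ∈ Pᶜ then x (e.symm ⟨i, h⟩) else 1 with hz
    have hzc : z ∈ cube n := by
      apply mem_cube.2
      intro i
      rw [hz]
      dsimp only
      split_ifs with h
      · exact hx' _
      · exact ⟨zero_le_one, le_refl 1⟩
    have hsub : box z ⊆ proj ⁻¹' box x := by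
      intro y hy
      simp only [box, Set.mem_preimage, Set.mem_pi, Set.mem_univ, true_implies] at hy ⊢
      intro j
      have := hy (e j)
      have hzval : z (e j) = x j := by
        rw [hz]
        dsimp only
        have hmem : (e j : Fin n) ∈ Pᶜ := (e j).2
        rw [dif_pos hmem]
        congr 1
        have : (⟨(e j : Fin n), hmem⟩ : {v // v ∈ Pᶜ}) = e j := Subtype.ext rfl
        rw [this, OrderIso.symm_apply_apply]
      rwa [hzval] at this
    have hsub2 : proj ⁻¹' box x ⊆ box z ∪ ⋃ i : Fin n, {y | y i ∉ Set.Icc (0:ℝ) 1} := by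
      intro y hy
      by_cases hgood : ∀ i : Fin n, y i ∈ Set.Icc (0:ℝ) 1
      · left
        simp only [box, Set.mem_preimage, Set.mem_pi, Set.mem_univ, true_implies] at hy ⊢
        intro i
        rw [hz]
        dsimp only
        split_ifs with h
        · have := hy (e.symm ⟨i, h⟩)
          have : y (e (e.symm ⟨i, h⟩) : Fin n) ∈ Set.Icc 0 (x (e.symm ⟨i, h⟩)) := this
          rwa [OrderIso.apply_symm_apply] at this
        · exact hgood i
      · right
        push_neg at hgood
        obtain ⟨i, hi⟩ := hgood
        exact Set.mem_iUnion.2 ⟨i, hi⟩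
    have hnull : μ (⋃ i : Fin n, {y | y i ∉ Set.Icc (0:ℝ) 1}) = 0 :=
      measure_iUnion_null fun i => coord_out_null hm i
    have hμeq : μ (proj ⁻¹' box x) = μ (box z) := by
      apply le_antisymm
      · calc μ (proj ⁻¹' box x) ≤ μ (box z ∪ ⋃ i : Fin n, {y | y i ∉ Set.Icc (0:ℝ) 1}) :=
              measure_mono hsub2
          _ ≤ μ (box z) + μ (⋃ i : Fin n, {y | y i ∉ Set.Icc (0:ℝ) 1}) := measure_union_le _ _
          _ = μ (box z) := by rw [hnull, add_zero]
      · exact measure_mono hsub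
    rw [Measure.map_apply hprojm (measurableSet_box x), hμeq]
    exact hb z hzc
  · intro j
    rw [Measure.map_map (measurable_pi_apply j) hprojm]
    exact hm (e j)

lemma symm_index {α : Type*} [LinearOrder α] {s : Finset α} {k : ℕ} (hcard : s.card = k)
    (f : Fin k → α) (hfs : ∀ j, f j ∈ s) (hmono : StrictMono f)
    (i : α) (h : i ∈ s) (j : Fin k) (hij : f j = i) :
    (s.orderIsoOfFin hcard).symm ⟨i, h⟩ = j := by
  have hf : f = s.orderEmbOfFin hcard := Finset.orderEmbOfFin_unique hcard hfs hmono
  have he : (s.orderIsoOfFin hcard) j = ⟨i, h⟩ := Subtype.ext (by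
    rw [Finset.coe_orderIsoOfFin_apply, ← hf, hij])
  rw [← he, OrderIso.symm_apply_apply]

lemma trans_marg (κ : ConcordanceMeasure) {C : (Fin 3 → ℝ) → ℝ} (hC : IsCopula C)
    (k : Fin 3) (τ : Equiv.Perm (Fin 3)) (hτk : τ.symm 0 = k)
    (D : (Fin 2 → ℝ) → ℝ) (hD : IsCopula D)
    (harg : ∀ x : Fin 2 → ℝ, D x = C fun i : Fin 3 => (fun j : Fin 3 =>
        if _ : (j : ℕ) = 0 then (1:ℝ) else x ⟨(j : ℕ) - 1, by have := j.isLt; omega⟩) (τ i)) :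
    κ.r 2 * κ.κ 2 D = κ.κ 3 C + κ.κ 3 (reflTrans {k} C) := by
  have h1 := κ.transition 2 (le_refl 2) D (permTrans τ C) hD (isCopula_perm hC τ)
    (fun x _ => harg x)
  rw [h1, κ.permInv 3 (by norm_num) C hC τ, refl_perm_single 0 τ C, hτk,
    κ.permInv 3 (by norm_num) (reflTrans {k} C) (isCopula_refl hC {k}) τ]

end Ubeda


open Ubeda

/-- The Úbeda identity for 3-copulas:
`r_3 κ_3(C) = (1/2) r_3 r_2 (κ_2(C_1) + κ_2(C_2) + κ_2(C_3))`; equivalently, since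
`r_2 = 2/3`, `κ_3(C) = (1/3)(κ_2(C_1) + κ_2(C_2) + κ_2(C_3))`. -/
theorem stmt17 (κ : ConcordanceMeasure) (hr2 : κ.r 2 = 2/3)
    (C : (Fin 3 → ℝ) → ℝ) (hC : IsCopula C) :
    κ.r 3 * κ.κ 3 C =
      (1/2) * (κ.r 3 * κ.r 2 *
        (κ.κ (({0} : Finset (Fin 3))ᶜ.card) (properMarg C {0}) +
         κ.κ (({1} : Finset (Fin 3))ᶜ.card) (properMarg C {1}) +
         κ.κ (({2} : Finset (Fin 3))ᶜ.card) (properMarg C {2}))) ∧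
    κ.κ 3 C =
      (1/3) * (κ.κ (({0} : Finset (Fin 3))ᶜ.card) (properMarg C {0}) +
               κ.κ (({1} : Finset (Fin 3))ᶜ.card) (properMarg C {1}) +
               κ.κ (({2} : Finset (Fin 3))ᶜ.card) (properMarg C {2})) := by
  -- the three marginal transition identities
  have h0 : κ.r 2 * κ.κ 2 (properMarg C {0}) = κ.κ 3 C + κ.κ 3 (reflTrans {0} C) := by
    apply trans_marg κ hC 0 (Equiv.refl (Fin 3)) (by decide)
      (properMarg C {0}) (isCopula_properMarg hC {0})
    intro x
    unfold properMarg
    apply congrArg C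
    funext i
    by_cases h : i ∈ ({0} : Finset (Fin 3))ᶜ
    · rw [dif_pos h]
      fin_cases i
      · exact absurd h (by decide)
      · rw [symm_index rfl ![1, 2] (by intro j; fin_cases j <;> decide) (by unfold StrictMono; decide) _ h (0 : Fin 2) (by decide)]
        rfl
      · rw [symm_index rfl ![1, 2] (by intro j; fin_cases j <;> decide) (by unfold StrictMono; decide) _ h (1 : Fin 2) (by decide)]
        rfl
    · rw [dif_neg h]
      fin_cases i
      · rfl
      · exact absurd (by decide) h
      · exact absurd (by decide) h
  have h1 : κ.r 2 * κ.κ 2 (properMarg C {1}) = κ.κ 3 C + κ.κ 3 (reflTrans {1} C) := by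
    apply trans_marg κ hC 1 (Equiv.swap 0 1) (by decide)
      (properMarg C {1}) (isCopula_properMarg hC {1})
    intro x
    unfold properMarg
    apply congrArg C
    funext i
    by_cases h : i ∈ ({1} : Finset (Fin 3))ᶜ
    · rw [dif_pos h]
      fin_cases i
      · rw [symm_index rfl ![0, 2] (by intro j; fin_cases j <;> decide) (by unfold StrictMono; decide) _ h (0 : Fin 2) (by decide)]
        rfl
      · exact absurd h (by decide)
      · rw [symm_index rfl ![0, 2] (by intro j; fin_cases j <;> decide) (by unfold StrictMono; decide) _ h (1 : Fin 2) (by decide)]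
        rfl
    · rw [dif_neg h]
      fin_cases i
      · exact absurd (by decide) h
      · rfl
      · exact absurd (by decide) h
  have h2 : κ.r 2 * κ.κ 2 (properMarg C {2}) = κ.κ 3 C + κ.κ 3 (reflTrans {2} C) := by
    apply trans_marg κ hC 2 (finRotate 3) (by decide)
      (properMarg C {2}) (isCopula_properMarg hC {2})
    intro x
    unfold properMarg
    apply congrArg C
    funext i
    by_cases h : i ∈ ({2} : Finset (Fin 3))ᶜ
    · rw [dif_pos h]
      fin_cases i
      · rw [symm_index rfl ![0, 1] (by intro j; fin_cases j <;> decide) (by unfold StrictMono; decide) _ h (0 : Fin 2) (by decide)]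
        rfl
      · rw [symm_index rfl ![0, 1] (by intro j; fin_cases j <;> decide) (by unfold StrictMono; decide) _ h (1 : Fin 2) (by decide)]
        rfl
      · exact absurd h (by decide)
    · rw [dif_neg h]
      fin_cases i
      · exact absurd (by decide) h
      · exact absurd (by decide) h
      · rfl
  -- the reflection symmetry property
  have hrsp := κ.rsp 3 (by norm_num) C hC
  have huniv : (Finset.univ : Finset (Finset (Fin 3)))
      = {∅, {0}, {1}, {2}, {0,1}, {0,2}, {1,2}, {0,1,2}} := by decide
  rw [huniv, Finset.sum_insert (by decide), Finset.sum_insert (by decide),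
    Finset.sum_insert (by decide), Finset.sum_insert (by decide),
    Finset.sum_insert (by decide), Finset.sum_insert (by decide),
    Finset.sum_insert (by decide), Finset.sum_singleton, refl_empty] at hrsp
  have hdual : κ.κ 3 (reflTrans {0,1,2} C) = κ.κ 3 C := by
    have huniv3 : ({0,1,2} : Finset (Fin 3)) = Finset.univ := by decide
    rw [huniv3]
    exact κ.duality 3 (by norm_num) C hC
  have h01 : κ.κ 3 (reflTrans {0,1} C) = κ.κ 3 (reflTrans {2} C) := by
    have : ({0,1} : Finset (Fin 3)) = ({2} : Finset (Fin 3))ᶜ := by decide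
    rw [this]
    exact refl_compl κ (by norm_num) hC {2}
  have h02 : κ.κ 3 (reflTrans {0,2} C) = κ.κ 3 (reflTrans {1} C) := by
    have : ({0,2} : Finset (Fin 3)) = ({1} : Finset (Fin 3))ᶜ := by decide
    rw [this]
    exact refl_compl κ (by norm_num) hC {1}
  have h12 : κ.κ 3 (reflTrans {1,2} C) = κ.κ 3 (reflTrans {0} C) := by
    have : ({1,2} : Finset (Fin 3)) = ({0} : Finset (Fin 3))ᶜ := by decide
    rw [this]
    exact refl_compl κ (by norm_num) hC {0}
  rw [hdual, h01, h02, h12] at hrsp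
  -- hence the sum of single reflections equals -κ₃(C)
  have hsum : κ.κ 3 (reflTrans {0} C) + κ.κ 3 (reflTrans {1} C) + κ.κ 3 (reflTrans {2} C)
      = - κ.κ 3 C := by linarith
  have hmain : κ.r 2 * (κ.κ 2 (properMarg C {0}) + κ.κ 2 (properMarg C {1})
      + κ.κ 2 (properMarg C {2})) = 2 * κ.κ 3 C := by
    have := h0
    have := h1
    have := h2
    nlinarith [h0, h1, h2, hsum]
  constructor
  · show κ.r 3 * κ.κ 3 C = (1/2) * (κ.r 3 * κ.r 2 *
      (κ.κ 2 (properMarg C {0}) + κ.κ 2 (properMarg C {1}) + κ.κ 2 (properMarg C {2})))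
    rw [mul_assoc, hmain]
    ring
  · show κ.κ 3 C = (1/3) * (κ.κ 2 (properMarg C {0}) + κ.κ 2 (properMarg C {1})
      + κ.κ 2 (properMarg C {2}))
    rw [hr2] at hmain
    linarith

end
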